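/- (Reverse l'Hôpital's rule) Let 𝓡 be an o-minimal structure on ℝ and let φ, ψ : (0, ε) → ℝ be definable and differentiable functions with lim_{t ↓ 0} φ(t) = lim_{t ↓ 0} ψ(t) = 0, and suppose ψ'(t) > 0 for all t sufficiently close to 0. Then for any ℓ ∈ ℝ, if φ(t)/ψ(t) → ℓ as t ↓ 0, then φ'(t)/ψ'(t) → ℓ as t ↓ 0. -/

import Mathlib

/-- A structure on ℝ in the sense of tame geometry: axioms (S1)-(S4).
`sets n` is the collection of definable subsets of ℝ^n. -/
structure RealStructure where
  sets : ∀ n : ℕ, Set (Set (Fin n → ℝ))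
  /-- (S1) each `sets n` is a boolean algebra of subsets of ℝ^n -/
  empty_mem : ∀ n, (∅ : Set (Fin n → ℝ)) ∈ sets n
  univ_mem : ∀ n, (Set.univ : Set (Fin n → ℝ)) ∈ sets n
  union_mem : ∀ n, ∀ A B : Set (Fin n → ℝ), A ∈ sets n → B ∈ sets n → A ∪ B ∈ sets n
  compl_mem : ∀ n, ∀ A : Set (Fin n → ℝ), A ∈ sets n → Aᶜ ∈ sets n
  /-- (S2) if A ∈ 𝓡_n then ℝ × A ∈ 𝓡_{n+1} -/
  prod_left_mem : ∀ n, ∀ A : Set (Fin n → ℝ), A ∈ sets n →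
    {x : Fin (n + 1) → ℝ | (fun i : Fin n => x i.succ) ∈ A} ∈ sets (n + 1)
  /-- (S2) if A ∈ 𝓡_n then A × ℝ ∈ 𝓡_{n+1} -/
  prod_right_mem : ∀ n, ∀ A : Set (Fin n → ℝ), A ∈ sets n →
    {x : Fin (n + 1) → ℝ | (fun i : Fin n => x i.castSucc) ∈ A} ∈ sets (n + 1)
  /-- (S3) the diagonal {x : x₁ = x_n} is definable -/
  diag_mem : ∀ n : ℕ, {x : Fin (n + 1) → ℝ | x 0 = x (Fin.last n)} ∈ sets (n + 1)
  /-- (S4) projection onto the first n coordinates preserves definability -/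
  proj_mem : ∀ n, ∀ A : Set (Fin (n + 1) → ℝ), A ∈ sets (n + 1) →
    (fun (x : Fin (n + 1) → ℝ) (i : Fin n) => x i.castSucc) '' A ∈ sets n

/-- An open interval (possibly unbounded) or a point in ℝ. -/
def IsOpenIntervalOrPoint (I : Set ℝ) : Prop :=
  (∃ a b : ℝ, I = Set.Ioo a b) ∨ (∃ a : ℝ, I = Set.Ioi a) ∨ (∃ a : ℝ, I = Set.Iio a) ∨
    I = Set.univ ∨ (∃ a : ℝ, I = {a})

/-- An o-minimal structure on ℝ: a structure satisfying moreover (S5), (S6), (O1), (O2). -/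
structure OminimalStructure extends RealStructure where
  /-- (S5) singletons are definable -/
  singleton_mem : ∀ a : ℝ, {x : Fin 1 → ℝ | x 0 = a} ∈ sets 1
  /-- (S6) the graph of addition is definable -/
  add_graph_mem : {x : Fin 3 → ℝ | x 2 = x 0 + x 1} ∈ sets 3
  /-- (S6) the graph of multiplication is definable -/
  mul_graph_mem : {x : Fin 3 → ℝ | x 2 = x 0 * x 1} ∈ sets 3
  /-- (O1) the order is definable -/
  lt_mem : {x : Fin 2 → ℝ | x 0 < x 1} ∈ sets 2
  /-- (O2) the definable subsets of ℝ are exactly the finite unions of open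
  intervals and points -/
  omin : ∀ A : Set (Fin 1 → ℝ), A ∈ sets 1 ↔
    ∃ T : Finset (Set ℝ), (∀ I ∈ T, IsOpenIntervalOrPoint I) ∧
      A = (fun x : Fin 1 → ℝ => x 0) ⁻¹' ⋃ I ∈ T, I


namespace RealStructure

lemma setOf_reindex_congr {n m : ℕ} {f g : Fin m → Fin n}
    (h : ∀ i, (f i).val = (g i).val) (A : Set (Fin m → ℝ)) :
    {x : Fin n → ℝ | (fun i => x (f i)) ∈ A} = {x : Fin n → ℝ | (fun i => x (g i)) ∈ A} := by
  have : f = g := funext fun i => Fin.ext (h i)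
  rw [this]

variable (R : RealStructure)

lemma inter_mem {n} {A B : Set (Fin n → ℝ)} (hA : A ∈ R.sets n) (hB : B ∈ R.sets n) :
    A ∩ B ∈ R.sets n := by
  have := R.compl_mem n _ (R.union_mem n _ _ (R.compl_mem n A hA) (R.compl_mem n B hB))
  simpa [Set.compl_union, compl_compl] using this

lemma cast_mem {m n : ℕ} (h : m = n) {A : Set (Fin m → ℝ)} (hA : A ∈ R.sets m) :
    {x : Fin n → ℝ | (fun i : Fin m => x (Fin.cast h i)) ∈ A} ∈ R.sets n := by
  subst h
  have : {x : Fin m → ℝ | (fun i : Fin m => x (Fin.cast rfl i)) ∈ A} = A := by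
    rw [setOf_reindex_congr (f := fun i => Fin.cast rfl i) (g := id) (fun i => rfl) A]
    rfl
  rw [this]; exact hA

lemma padLastIter {n : ℕ} (k : ℕ) {A : Set (Fin n → ℝ)} (hA : A ∈ R.sets n) :
    {x : Fin (n + k) → ℝ | (fun i : Fin n => x (Fin.castAdd k i)) ∈ A} ∈ R.sets (n + k) := by
  induction k with
  | zero =>
    rw [setOf_reindex_congr (f := fun i => Fin.castAdd 0 i) (g := id) (fun i => rfl) A]
    exact hA
  | succ k ih =>
    have h2 := R.prod_right_mem (n + k) _ ih
    have h3 : {x : Fin (n + k + 1) → ℝ | (fun i : Fin (n+k) => x i.castSucc) ∈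
        {x : Fin (n + k) → ℝ | (fun i : Fin n => x (Fin.castAdd k i)) ∈ A}}
        = {x : Fin (n + k + 1) → ℝ | (fun i : Fin n => x ((Fin.castAdd k i).castSucc)) ∈ A} := rfl
    rw [h3, setOf_reindex_congr (f := fun i => (Fin.castAdd k i).castSucc) (g := fun i => Fin.castAdd (k+1) i) (fun i => rfl) A] at h2
    exact h2

lemma padFrontIter (n : ℕ) {k : ℕ} {A : Set (Fin k → ℝ)} (hA : A ∈ R.sets k) :
    {x : Fin (n + k) → ℝ | (fun i : Fin k => x (Fin.natAdd n i)) ∈ A} ∈ R.sets (n + k) := by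
  induction n with
  | zero =>
    have h2 := R.cast_mem (show k = 0 + k by omega) hA
    rw [setOf_reindex_congr (f := fun i => Fin.cast (show k = 0 + k by omega) i) (g := fun i => Fin.natAdd 0 i) (fun i => by simp) A] at h2
    exact h2
  | succ n ih =>
    have h2 := R.prod_left_mem (n + k) _ ih
    have h3 : {x : Fin (n + k + 1) → ℝ | (fun i : Fin (n+k) => x i.succ) ∈
        {x : Fin (n + k) → ℝ | (fun i : Fin k => x (Fin.natAdd n i)) ∈ A}}
        = {x : Fin (n + k + 1) → ℝ | (fun i : Fin k => x (Fin.natAdd n i).succ) ∈ A} := rfl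
    rw [h3] at h2
    have h4 := R.cast_mem (show (n + k) + 1 = (n + 1) + k by omega)
      (A := {x : Fin (n + k + 1) → ℝ | (fun i : Fin k => x (Fin.natAdd n i).succ) ∈ A}) h2
    have h5 : {x : Fin ((n+1) + k) → ℝ |
        (fun j : Fin (n + k + 1) => x (Fin.cast (show (n + k) + 1 = (n + 1) + k by omega) j)) ∈
        {x : Fin (n + k + 1) → ℝ | (fun i : Fin k => x (Fin.natAdd n i).succ) ∈ A}}
        = {x : Fin ((n+1) + k) → ℝ | (fun i : Fin k =>
            x (Fin.cast (show (n + k) + 1 = (n + 1) + k by omega) (Fin.natAdd n i).succ)) ∈ A} := rfl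
    rw [h5, setOf_reindex_congr (f := fun i => Fin.cast (show (n + k) + 1 = (n + 1) + k by omega) (Fin.natAdd n i).succ) (g := fun i => Fin.natAdd (n+1) i) (fun i => by simp; omega) A] at h4
    exact h4

lemma proj_eq_exists {n : ℕ} (A : Set (Fin (n+1) → ℝ)) :
    (fun (x : Fin (n + 1) → ℝ) (i : Fin n) => x i.castSucc) '' A
      = {x : Fin n → ℝ | ∃ y : ℝ, Fin.snoc x y ∈ A} := by
  ext x
  constructor
  · rintro ⟨z, hz, rfl⟩
    refine ⟨z (Fin.last n), ?_⟩
    have : (Fin.snoc (fun i : Fin n => z i.castSucc) (z (Fin.last n)) : Fin (n+1) → ℝ) = z :=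
      Fin.snoc_init_self z
    rw [this]; exact hz
  · rintro ⟨y, hy⟩
    exact ⟨Fin.snoc x y, hy, by funext i; simp [Fin.snoc_castSucc]⟩

lemma exists_mem {n : ℕ} {A : Set (Fin (n+1) → ℝ)} (hA : A ∈ R.sets (n+1)) :
    {x : Fin n → ℝ | ∃ y : ℝ, Fin.snoc x y ∈ A} ∈ R.sets n := by
  rw [← proj_eq_exists]; exact R.proj_mem n A hA

lemma existsIter {n : ℕ} (k : ℕ) {A : Set (Fin (n + k) → ℝ)} (hA : A ∈ R.sets (n + k)) :
    {x : Fin n → ℝ | ∃ y : Fin k → ℝ, Fin.append x y ∈ A} ∈ R.sets n := by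
  induction k with
  | zero =>
    have : {x : Fin n → ℝ | ∃ y : Fin 0 → ℝ, Fin.append x y ∈ A} = A := by
      ext x
      simp only [Set.mem_setOf_eq]
      constructor
      · rintro ⟨y, hy⟩
        have hy2 : y = Fin.elim0 := Subsingleton.elim _ _
        rw [hy2, Fin.append_elim0] at hy
        have : x ∘ Fin.cast (Nat.add_zero n) = x := by
          funext i; exact congrArg x (Fin.ext rfl)
        rwa [this] at hy
      · intro hx
        refine ⟨Fin.elim0, ?_⟩
        rw [Fin.append_elim0]
        have : x ∘ Fin.cast (Nat.add_zero n) = x := by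
          funext i; exact congrArg x (Fin.ext rfl)
        rwa [this]
    rw [this]; exact hA
  | succ k ih =>
    have h1 : {x : Fin (n + k) → ℝ | ∃ y : ℝ, Fin.snoc x y ∈ A} ∈ R.sets (n + k) :=
      R.exists_mem hA
    have h2 := ih h1
    have h3 : {x : Fin n → ℝ | ∃ y : Fin k → ℝ, Fin.append x y ∈
        {x : Fin (n + k) → ℝ | ∃ y : ℝ, Fin.snoc x y ∈ A}}
        = {x : Fin n → ℝ | ∃ y : Fin (k+1) → ℝ, Fin.append x y ∈ A} := by
      ext x
      simp only [Set.mem_setOf_eq]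
      constructor
      · rintro ⟨y, a, ha⟩
        exact ⟨Fin.snoc y a, by rw [Fin.append_snoc]; exact ha⟩
      · rintro ⟨y, hy⟩
        refine ⟨Fin.init y, y (Fin.last k), ?_⟩
        rw [← Fin.append_snoc]
        have : (Fin.snoc (Fin.init y) (y (Fin.last k)) : Fin (k+1) → ℝ) = y := Fin.snoc_init_self y
        rw [this]; exact hy
    rw [h3] at h2
    exact h2

end RealStructure

namespace RealStructure
variable (R : RealStructure)

lemma iInter_mem {n : ℕ} : ∀ {k : ℕ} (A : Fin k → Set (Fin n → ℝ)),
    (∀ j, A j ∈ R.sets n) → (⋂ j, A j) ∈ R.sets n := by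
  intro k
  induction k with
  | zero =>
    intro A _
    rw [Set.iInter_of_empty]
    exact R.univ_mem n
  | succ k ih =>
    intro A hA
    have : (⋂ j, A j) = A 0 ∩ ⋂ j : Fin k, A j.succ := by
      ext x; simp [Set.mem_iInter, Fin.forall_fin_succ]
    rw [this]
    exact R.inter_mem (hA 0) (ih _ (fun j => hA j.succ))

lemma eqCoord_mem {m : ℕ} (i j : Fin m) : {x : Fin m → ℝ | x i = x j} ∈ R.sets m := by
  -- WLOG i.val < j.val
  have key : ∀ (i j : Fin m), i.val < j.val → {x : Fin m → ℝ | x i = x j} ∈ R.sets m := by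
    intro i j hij
    set d := j.val - i.val with hd
    have hd1 : 1 ≤ d := by omega
    -- diag in dimension d + 1
    have h0 := R.diag_mem d
    -- pad front i.val times
    have h1 := R.padFrontIter i.val h0
    have h1' : {x : Fin (i.val + (d+1)) → ℝ |
        (fun t : Fin (d+1) => x (Fin.natAdd i.val t)) ∈
          {y : Fin (d+1) → ℝ | y 0 = y (Fin.last d)}} =
        {x : Fin (i.val + (d+1)) → ℝ |
          x (Fin.natAdd i.val 0) = x (Fin.natAdd i.val (Fin.last d))} := rfl
    rw [h1'] at h1
    -- pad last (m - j - 1) times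
    have h2 := R.padLastIter (m - j.val - 1) h1
    set N := i.val + (d+1) + (m - j.val - 1) with hN
    have hNm : N = m := by omega
    have h2' : {x : Fin N → ℝ | (fun t : Fin (i.val + (d+1)) =>
          x (Fin.castAdd (m - j.val - 1) t)) ∈
        {x : Fin (i.val + (d+1)) → ℝ |
          x (Fin.natAdd i.val 0) = x (Fin.natAdd i.val (Fin.last d))}} =
        {x : Fin N → ℝ | x (Fin.castAdd (m - j.val - 1) (Fin.natAdd i.val 0))
          = x (Fin.castAdd (m - j.val - 1) (Fin.natAdd i.val (Fin.last d)))} := rfl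
    rw [h2'] at h2
    have h3 := R.cast_mem hNm h2
    have h3' : {x : Fin m → ℝ | (fun t : Fin N => x (Fin.cast hNm t)) ∈
        {x : Fin N → ℝ | x (Fin.castAdd (m - j.val - 1) (Fin.natAdd i.val 0))
          = x (Fin.castAdd (m - j.val - 1) (Fin.natAdd i.val (Fin.last d)))}} =
        {x : Fin m → ℝ |
          x (Fin.cast hNm (Fin.castAdd (m - j.val - 1) (Fin.natAdd i.val 0)))
          = x (Fin.cast hNm (Fin.castAdd (m - j.val - 1) (Fin.natAdd i.val (Fin.last d))))} := rfl
    rw [h3'] at h3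
    have e1 : (Fin.cast hNm (Fin.castAdd (m - j.val - 1) (Fin.natAdd i.val 0))) = i :=
      Fin.ext (by simp)
    have e2 : (Fin.cast hNm (Fin.castAdd (m - j.val - 1) (Fin.natAdd i.val (Fin.last d)))) = j :=
      Fin.ext (by simp [Fin.last]; omega)
    rw [e1, e2] at h3
    exact h3
  rcases lt_trichotomy i.val j.val with h | h | h
  · exact key i j h
  · have : i = j := Fin.ext h
    subst this
    have : {x : Fin m → ℝ | x i = x i} = Set.univ := by ext x; simp
    rw [this]; exact R.univ_mem m
  · have : {x : Fin m → ℝ | x i = x j} = {x : Fin m → ℝ | x j = x i} := by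
      ext x; simp [eq_comm]
    rw [this]; exact key j i h

/-- The substitution / reindexing closure lemma. -/
theorem comp_mem {k n : ℕ} {A : Set (Fin k → ℝ)} (hA : A ∈ R.sets k) (f : Fin k → Fin n) :
    {x : Fin n → ℝ | (fun j => x (f j)) ∈ A} ∈ R.sets n := by
  -- B : A on the last k coordinates of ℝ^(n+k)
  have hB := R.padFrontIter n hA
  -- E : equalities z (natAdd n j) = z (castAdd k (f j))
  have hE : (⋂ j : Fin k, {z : Fin (n + k) → ℝ |
      z (Fin.natAdd n j) = z (Fin.castAdd k (f j))}) ∈ R.sets (n + k) :=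
    R.iInter_mem _ (fun j => R.eqCoord_mem _ _)
  have hC := R.inter_mem hB hE
  have h2 := R.existsIter k hC
  have h3 : {x : Fin n → ℝ | ∃ y : Fin k → ℝ, Fin.append x y ∈
      ({z : Fin (n + k) → ℝ | (fun i : Fin k => z (Fin.natAdd n i)) ∈ A} ∩
        ⋂ j : Fin k, {z : Fin (n + k) → ℝ |
          z (Fin.natAdd n j) = z (Fin.castAdd k (f j))})}
      = {x : Fin n → ℝ | (fun j => x (f j)) ∈ A} := by
    ext x
    simp only [Set.mem_setOf_eq, Set.mem_inter_iff, Set.mem_iInter]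
    constructor
    · rintro ⟨y, hy1, hy2⟩
      have hyx : ∀ j, y j = x (f j) := by
        intro j
        have := hy2 j
        rwa [Fin.append_right, Fin.append_left] at this
      have : (fun i : Fin k => Fin.append x y (Fin.natAdd n i)) = fun j => x (f j) := by
        funext j; rw [Fin.append_right, hyx j]
      rwa [this] at hy1
    · intro hx
      refine ⟨fun j => x (f j), ?_, ?_⟩
      · have : (fun i : Fin k => Fin.append x (fun j => x (f j)) (Fin.natAdd n i))
            = fun j => x (f j) := by
          funext j; rw [Fin.append_right]
        rwa [this]
      · intro j
        rw [Fin.append_right, Fin.append_left]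
  rw [h3] at h2
  exact h2

end RealStructure

/-- First-order formulas over a real structure, with definable sets as atoms. -/
inductive Fml (R : RealStructure) : ℕ → Type
  | atom {n : ℕ} (k : ℕ) (A : Set (Fin k → ℝ)) (hA : A ∈ R.sets k) (f : Fin k → Fin n) : Fml R n
  | not {n : ℕ} (φ : Fml R n) : Fml R n
  | and {n : ℕ} (φ ψ : Fml R n) : Fml R n
  | ex {n : ℕ} (φ : Fml R (n + 1)) : Fml R n

namespace Fml
variable {R : RealStructure}

def Realize : {n : ℕ} → Fml R n → (Fin n → ℝ) → Prop
  | _, atom _ A _ f, x => (fun j => x (f j)) ∈ A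
  | _, not φ, x => ¬ φ.Realize x
  | _, and φ ψ, x => φ.Realize x ∧ ψ.Realize x
  | _, ex φ, x => ∃ y : ℝ, φ.Realize (Fin.snoc x y)

theorem realize_mem : ∀ {n : ℕ} (φ : Fml R n), {x | φ.Realize x} ∈ R.sets n
  | _, atom k A hA f => R.comp_mem hA f
  | n, not φ => by
      have := R.compl_mem n _ (realize_mem φ)
      exact this
  | n, and φ ψ => by
      have := R.inter_mem (realize_mem φ) (realize_mem ψ)
      exact this
  | n, ex φ => by
      have := R.exists_mem (realize_mem φ)
      convert this using 1
      ext x; exact Iff.rfl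

def or {n : ℕ} (φ ψ : Fml R n) : Fml R n := not (and (not φ) (not ψ))

def imp {n : ℕ} (φ ψ : Fml R n) : Fml R n := not (and φ (not ψ))

def all {n : ℕ} (φ : Fml R (n + 1)) : Fml R n := not (ex (not φ))

@[simp] theorem realize_not {n} (φ : Fml R n) (x) : (not φ).Realize x ↔ ¬ φ.Realize x := Iff.rfl
@[simp] theorem realize_and {n} (φ ψ : Fml R n) (x) :
    (and φ ψ).Realize x ↔ φ.Realize x ∧ ψ.Realize x := Iff.rfl
@[simp] theorem realize_ex {n} (φ : Fml R (n+1)) (x) :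
    (ex φ).Realize x ↔ ∃ y : ℝ, φ.Realize (Fin.snoc x y) := Iff.rfl
@[simp] theorem realize_or {n} (φ ψ : Fml R n) (x) :
    (or φ ψ).Realize x ↔ φ.Realize x ∨ ψ.Realize x := by
  simp only [or, Realize]
  tauto
@[simp] theorem realize_imp {n} (φ ψ : Fml R n) (x) :
    (imp φ ψ).Realize x ↔ (φ.Realize x → ψ.Realize x) := by
  simp only [imp, Realize]
  tauto
@[simp] theorem realize_all {n} (φ : Fml R (n+1)) (x) :
    (all φ).Realize x ↔ ∀ y : ℝ, φ.Realize (Fin.snoc x y) := by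
  simp only [all, Realize]
  push_neg
  rfl

end Fml

namespace Fml
variable {S : OminimalStructure}

/-- x i < x j -/
def ltV {n : ℕ} (i j : Fin n) : Fml S.toRealStructure n :=
  atom 2 _ S.lt_mem ![i, j]

/-- x i = x j -/
def eqV {n : ℕ} (i j : Fin n) : Fml S.toRealStructure n :=
  atom 2 _ (S.diag_mem 1) ![i, j]

/-- x i = x j + x k -/
def addV {n : ℕ} (i j k : Fin n) : Fml S.toRealStructure n :=
  atom 3 _ S.add_graph_mem ![j, k, i]

/-- x i = x j * x k -/
def mulV {n : ℕ} (i j k : Fin n) : Fml S.toRealStructure n :=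
  atom 3 _ S.mul_graph_mem ![j, k, i]

/-- x i = c -/
def constV {n : ℕ} (i : Fin n) (c : ℝ) : Fml S.toRealStructure n :=
  atom 1 _ (S.singleton_mem c) ![i]

@[simp] theorem realize_ltV {n} (i j : Fin n) (x) : (ltV (S := S) i j).Realize x ↔ x i < x j :=
  Iff.rfl
@[simp] theorem realize_eqV {n} (i j : Fin n) (x) : (eqV (S := S) i j).Realize x ↔ x i = x j :=
  Iff.rfl
@[simp] theorem realize_addV {n} (i j k : Fin n) (x) :
    (addV (S := S) i j k).Realize x ↔ x i = x j + x k := Iff.rfl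
@[simp] theorem realize_mulV {n} (i j k : Fin n) (x) :
    (mulV (S := S) i j k).Realize x ↔ x i = x j * x k := Iff.rfl
@[simp] theorem realize_constV {n} (i : Fin n) (c : ℝ) (x) :
    (constV (S := S) i c).Realize x ↔ x i = c := Iff.rfl

end Fml

section Formulas

open Fml

variable {S : OminimalStructure} {ε : ℝ} {φ ψ : ℝ → ℝ}

variable (c : ℝ)
  (hφdef : {x : Fin 2 → ℝ | x 0 ∈ Set.Ioo 0 ε ∧ x 1 = φ (x 0)} ∈ S.sets 2)
  (hψdef : {x : Fin 2 → ℝ | x 0 ∈ Set.Ioo 0 ε ∧ x 1 = ψ (x 0)} ∈ S.sets 2)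

/-- Formula for the graph of t ↦ φ t - c * ψ t on (0, ε): variables (t, y). -/
def gammaG : Fml S.toRealStructure 2 :=
  -- vars: 0=t, 1=y, 2=u, 3=v, 4=w, 5=z
  .ex (.ex (.ex (.ex (
    .and (.atom 2 _ hφdef ![0, 2])
    (.and (.atom 2 _ hψdef ![0, 3])
    (.and (constV 5 c)
    (.and (mulV 4 5 3)
          (addV 2 1 4))))))))

theorem realize_gammaG (x : Fin 2 → ℝ) :
    (gammaG c hφdef hψdef).Realize x ↔
      x 0 ∈ Set.Ioo 0 ε ∧ x 1 = φ (x 0) - c * ψ (x 0) := by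
  have h : (gammaG c hφdef hψdef).Realize x ↔
      (∃ u v w z : ℝ, (x 0 ∈ Set.Ioo 0 ε ∧ u = φ (x 0)) ∧
        ((x 0 ∈ Set.Ioo 0 ε ∧ v = ψ (x 0)) ∧ (z = c ∧ (w = z * v ∧ u = x 1 + w)))) := Iff.rfl
  rw [h]
  constructor
  · rintro ⟨u, v, w, z, ⟨hx, rfl⟩, ⟨-, rfl⟩, rfl, rfl, h5⟩
    exact ⟨hx, by linarith⟩
  · rintro ⟨hx, hy⟩
    exact ⟨φ (x 0), ψ (x 0), c * ψ (x 0), c, ⟨hx, rfl⟩, ⟨hx, rfl⟩, rfl, rfl, by linarith⟩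


def setG : Set (Fin 2 → ℝ) := {x | (gammaG c hφdef hψdef).Realize x}

theorem setG_mem : setG c hφdef hψdef ∈ S.sets 2 := Fml.realize_mem _

def GRaw (a b : ℝ) : Prop :=
  ∃ u v w z : ℝ, (a ∈ Set.Ioo 0 ε ∧ u = φ a) ∧
    ((a ∈ Set.Ioo 0 ε ∧ v = ψ a) ∧ (z = c ∧ (w = z * v ∧ u = b + w)))

theorem GRaw_iff (a b : ℝ) : GRaw (ε := ε) (φ := φ) (ψ := ψ) c a b ↔
    (a ∈ Set.Ioo 0 ε ∧ b = φ a - c * ψ a) := by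
  constructor
  · rintro ⟨u, v, w, z, ⟨hx, rfl⟩, ⟨-, rfl⟩, rfl, rfl, h5⟩
    exact ⟨hx, by linarith⟩
  · rintro ⟨hx, hy⟩
    exact ⟨φ a, ψ a, c * ψ a, c, ⟨hx, rfl⟩, ⟨hx, rfl⟩, rfl, rfl, by linarith⟩

variable (S ε) in
def charPos : Fml S.toRealStructure 1 :=
  (.and (.ex (.ex (.and (constV 1 0) (.and (constV 2 ε) (.and (ltV 1 0) (ltV 0 2)))))) (.ex (.ex (.and (.ex (.and (constV 3 0) (ltV 3 1))) (.and (.ex (.and (constV 3 0) (ltV 3 2))) (.not (.ex (.and (ltV 0 3) (.and (.ex (.and (addV 4 0 2) (ltV 3 4))) (.and (.ex (.and (constV 4 ε) (ltV 3 4))) (.ex (.ex (.and (.atom 2 _ (setG_mem (c := c) (hφdef := hφdef) (hψdef := hψdef)) ![3, 4]) (.and (.atom 2 _ (setG_mem (c := c) (hφdef := hφdef) (hψdef := hψdef)) ![0, 5]) (.ex (.ex (.ex (.and (addV 3 0 6) (.and (mulV 7 1 6) (.and (addV 8 5 7) (ltV 4 8)))))))))))))))))))))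

variable (S ε) in
def charNeg : Fml S.toRealStructure 1 :=
  (.and (.ex (.ex (.and (constV 1 0) (.and (constV 2 ε) (.and (ltV 1 0) (ltV 0 2)))))) (.ex (.ex (.and (.ex (.and (constV 3 0) (ltV 3 1))) (.and (.ex (.and (constV 3 0) (ltV 3 2))) (.not (.ex (.and (ltV 0 3) (.and (.ex (.and (addV 4 0 2) (ltV 3 4))) (.and (.ex (.and (constV 4 ε) (ltV 3 4))) (.ex (.ex (.and (.atom 2 _ (setG_mem (c := c) (hφdef := hφdef) (hψdef := hψdef)) ![3, 4]) (.and (.atom 2 _ (setG_mem (c := c) (hφdef := hφdef) (hψdef := hψdef)) ![0, 5]) (.ex (.ex (.ex (.and (addV 3 0 6) (.and (mulV 7 1 6) (.and (addV 5 8 7) (ltV 8 4)))))))))))))))))))))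

theorem realize_charPos (x : Fin 1 → ℝ) :
    (charPos S ε c hφdef hψdef).Realize x ↔
      (x 0 ∈ Set.Ioo 0 ε ∧ ∃ r η : ℝ, 0 < r ∧ 0 < η ∧
        ∀ s, x 0 < s → s < x 0 + η → s < ε →
          (φ (x 0) - c * ψ (x 0)) + r * (s - x 0) ≤ φ s - c * ψ s) := by
  set t := x 0 with ht
  have h : (charPos S ε c hφdef hψdef).Realize x ↔
      ((∃ z e : ℝ, z = 0 ∧ (e = ε ∧ (z < t ∧ t < e))) ∧
        ∃ r η : ℝ, (∃ z, z = (0:ℝ) ∧ z < r) ∧ ((∃ z, z = (0:ℝ) ∧ z < η) ∧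
          ¬ ∃ s : ℝ, t < s ∧ ((∃ m, m = t + η ∧ s < m) ∧ ((∃ e, e = ε ∧ s < e) ∧
            ∃ u v : ℝ, GRaw (ε := ε) (φ := φ) (ψ := ψ) c s u ∧
              (GRaw (ε := ε) (φ := φ) (ψ := ψ) c t v ∧
                ∃ d p w : ℝ, s = t + d ∧ (p = r * d ∧ (w = v + p ∧ u < w))))))) := Iff.rfl
  rw [h]
  constructor
  · rintro ⟨⟨z, e, rfl, rfl, h1, h2⟩, r, η, ⟨z1, rfl, hr⟩, ⟨z2, rfl, hη⟩, H⟩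
    refine ⟨⟨h1, h2⟩, r, η, hr, hη, ?_⟩
    intro s hs1 hs2 hs3
    by_contra hc
    push_neg at hc
    refine H ⟨s, hs1, ⟨t + η, rfl, hs2⟩, ⟨_, rfl, hs3⟩,
      φ s - c * ψ s, φ t - c * ψ t,
      (GRaw_iff _ _ _).2 ⟨⟨by linarith, hs3⟩, rfl⟩,
      (GRaw_iff _ _ _).2 ⟨⟨h1, h2⟩, rfl⟩,
      s - t, r * (s - t), (φ t - c * ψ t) + r * (s - t), by ring, rfl, rfl, hc⟩
  · rintro ⟨hIoo, r, η, hr, hη, H⟩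
    refine ⟨⟨0, ε, rfl, rfl, hIoo.1, hIoo.2⟩, r, η, ⟨0, rfl, hr⟩, ⟨0, rfl, hη⟩, ?_⟩
    rintro ⟨s, hs1, ⟨m, rfl, hs2⟩, ⟨e, rfl, hs3⟩, u, v, hu, hv, d, p, w, hd, hp, hw, hlt⟩
    rw [GRaw_iff] at hu hv
    have hH := H s hs1 hs2 hs3
    rw [hu.2] at hlt
    rw [hv.2, hp] at hw
    have hd' : d = s - t := by linarith
    rw [hd'] at hw
    linarith

theorem realize_charNeg (x : Fin 1 → ℝ) :
    (charNeg S ε c hφdef hψdef).Realize x ↔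
      (x 0 ∈ Set.Ioo 0 ε ∧ ∃ r η : ℝ, 0 < r ∧ 0 < η ∧
        ∀ s, x 0 < s → s < x 0 + η → s < ε →
          φ s - c * ψ s ≤ (φ (x 0) - c * ψ (x 0)) - r * (s - x 0)) := by
  set t := x 0 with ht
  have h : (charNeg S ε c hφdef hψdef).Realize x ↔
      ((∃ z e : ℝ, z = 0 ∧ (e = ε ∧ (z < t ∧ t < e))) ∧
        ∃ r η : ℝ, (∃ z, z = (0:ℝ) ∧ z < r) ∧ ((∃ z, z = (0:ℝ) ∧ z < η) ∧
          ¬ ∃ s : ℝ, t < s ∧ ((∃ m, m = t + η ∧ s < m) ∧ ((∃ e, e = ε ∧ s < e) ∧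
            ∃ u v : ℝ, GRaw (ε := ε) (φ := φ) (ψ := ψ) c s u ∧
              (GRaw (ε := ε) (φ := φ) (ψ := ψ) c t v ∧
                ∃ d p w : ℝ, s = t + d ∧ (p = r * d ∧ (v = w + p ∧ w < u))))))) := Iff.rfl
  rw [h]
  constructor
  · rintro ⟨⟨z, e, rfl, rfl, h1, h2⟩, r, η, ⟨z1, rfl, hr⟩, ⟨z2, rfl, hη⟩, H⟩
    refine ⟨⟨h1, h2⟩, r, η, hr, hη, ?_⟩
    intro s hs1 hs2 hs3
    by_contra hc
    push_neg at hc
    refine H ⟨s, hs1, ⟨t + η, rfl, hs2⟩, ⟨_, rfl, hs3⟩,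
      φ s - c * ψ s, φ t - c * ψ t,
      (GRaw_iff _ _ _).2 ⟨⟨by linarith, hs3⟩, rfl⟩,
      (GRaw_iff _ _ _).2 ⟨⟨h1, h2⟩, rfl⟩,
      s - t, r * (s - t), (φ t - c * ψ t) - r * (s - t), by ring, rfl, by ring, hc⟩
  · rintro ⟨hIoo, r, η, hr, hη, H⟩
    refine ⟨⟨0, ε, rfl, rfl, hIoo.1, hIoo.2⟩, r, η, ⟨0, rfl, hr⟩, ⟨0, rfl, hη⟩, ?_⟩
    rintro ⟨s, hs1, ⟨m, rfl, hs2⟩, ⟨e, rfl, hs3⟩, u, v, hu, hv, d, p, w, hd, hp, hw, hlt⟩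
    rw [GRaw_iff] at hu hv
    have hH := H s hs1 hs2 hs3
    rw [hu.2] at hlt
    rw [hp] at hw
    have hd' : d = s - t := by linarith
    rw [hd', hv.2] at hw
    linarith

end Formulas

open Filter Topology Set

lemma interval_dichotomy {I : Set ℝ} (hI : IsOpenIntervalOrPoint I) :
    (∀ᶠ t in 𝓝[>] (0:ℝ), t ∈ I) ∨ (∀ᶠ t in 𝓝[>] (0:ℝ), t ∉ I) := by
  have hIoi : Set.Ioi (0:ℝ) ∈ 𝓝[>] (0:ℝ) := self_mem_nhdsWithin
  rcases hI with ⟨a, b, rfl⟩ | ⟨a, rfl⟩ | ⟨a, rfl⟩ | rfl | ⟨a, rfl⟩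
  · by_cases hab : a ≤ 0 ∧ 0 < b
    · left
      filter_upwards [Ioo_mem_nhdsGT_of_mem (show (0:ℝ) ∈ Set.Ico 0 b from ⟨le_refl _, hab.2⟩)]
        with t ht
      exact ⟨lt_of_le_of_lt hab.1 ht.1, ht.2⟩
    · right
      push_neg at hab
      by_cases ha : 0 < a
      · filter_upwards [Ioo_mem_nhdsGT_of_mem (show (0:ℝ) ∈ Set.Ico 0 a from ⟨le_refl _, ha⟩)]
          with t ht hmem
        exact absurd hmem.1 (not_lt.2 ht.2.le)
      · have hb : b ≤ 0 := hab (not_lt.1 ha)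
        filter_upwards [hIoi] with t ht hmem
        exact absurd (hmem.2.trans_le hb) (not_lt.2 ht.le)
  · by_cases ha : a ≤ 0
    · left
      filter_upwards [hIoi] with t ht
      exact lt_of_le_of_lt ha ht
    · right
      push_neg at ha
      filter_upwards [Ioo_mem_nhdsGT_of_mem (show (0:ℝ) ∈ Set.Ico 0 a from ⟨le_refl _, ha⟩)]
        with t ht hmem
      exact absurd hmem (not_lt.2 ht.2.le)
  · by_cases ha : 0 < a
    · left
      filter_upwards [Ioo_mem_nhdsGT_of_mem (show (0:ℝ) ∈ Set.Ico 0 a from ⟨le_refl _, ha⟩)]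
        with t ht
      exact ht.2
    · right
      filter_upwards [hIoi] with t ht hmem
      exact absurd (hmem.trans_le (not_lt.1 ha)) (not_lt.2 ht.le)
  · left; filter_upwards with t; trivial
  · by_cases ha : 0 < a
    · right
      filter_upwards [Ioo_mem_nhdsGT_of_mem (show (0:ℝ) ∈ Set.Ico 0 a from ⟨le_refl _, ha⟩)]
        with t ht hmem
      rw [Set.mem_singleton_iff] at hmem
      exact absurd ht.2 (by rw [hmem]; exact lt_irrefl a)
    · right
      filter_upwards [hIoi] with t ht hmem
      rw [Set.mem_singleton_iff] at hmem
      exact absurd ht (by rw [hmem]; exact not_lt.2 (not_lt.1 ha))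

lemma omin_dichotomy (S : OminimalStructure) {A : Set (Fin 1 → ℝ)} (hA : A ∈ S.sets 1) :
    (∀ᶠ t in 𝓝[>] (0:ℝ), (fun _ : Fin 1 => t) ∈ A) ∨
      (∀ᶠ t in 𝓝[>] (0:ℝ), (fun _ : Fin 1 => t) ∉ A) := by
  obtain ⟨T, hT, hAeq⟩ := (S.omin A).1 hA
  have hmem : ∀ t : ℝ, ((fun _ : Fin 1 => t) ∈ A ↔ t ∈ ⋃ I ∈ T, I) := by
    intro t
    rw [hAeq]
    exact Iff.rfl
  by_cases hex : ∃ I ∈ T, ∀ᶠ t in 𝓝[>] (0:ℝ), t ∈ I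
  · left
    obtain ⟨I, hIT, hIe⟩ := hex
    filter_upwards [hIe] with t ht
    exact (hmem t).2 (Set.mem_biUnion hIT ht)
  · right
    push_neg at hex
    have hall : ∀ I ∈ T, ∀ᶠ t in 𝓝[>] (0:ℝ), t ∉ I := by
      intro I hIT
      rcases interval_dichotomy (hT I hIT) with h | h
      · exact absurd h (Filter.not_eventually.2 (hex I hIT))
      · exact h
    have := (Filter.eventually_all_finset T).2 hall
    filter_upwards [this] with t ht hmemA
    obtain ⟨I, hIT, htI⟩ := Set.mem_iUnion₂.1 ((hmem t).1 hmemA)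
    exact ht I hIT htI

section Analysis

open Filter Topology Set

lemma pos_of_char {g : ℝ → ℝ} {g' t εv : ℝ} (ht : t < εv) (hd : HasDerivAt g g' t)
    (h : ∃ r η : ℝ, 0 < r ∧ 0 < η ∧
      ∀ s, t < s → s < t + η → s < εv → g t + r * (s - t) ≤ g s) : 0 < g' := by
  obtain ⟨r, η, hr, hη, H⟩ := h
  have hmono : 𝓝[>] t ≤ 𝓝[≠] t :=
    nhdsWithin_mono t (fun s hs => ne_of_gt hs)
  have hslope : Tendsto (slope g t) (𝓝[>] t) (𝓝 g') :=
    (hasDerivAt_iff_tendsto_slope.1 hd).mono_left hmono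
  have hev : ∀ᶠ s in 𝓝[>] t, r ≤ slope g t s := by
    filter_upwards [Ioo_mem_nhdsGT_of_mem
      (show t ∈ Set.Ico t (min (t + η) εv) from ⟨le_refl _, lt_min (by linarith) ht⟩)] with s hs
    have h1 : t < s := hs.1
    have h2 : s < t + η := lt_of_lt_of_le hs.2 (min_le_left _ _)
    have h3 : s < εv := lt_of_lt_of_le hs.2 (min_le_right _ _)
    have := H s h1 h2 h3
    rw [slope_def_field]
    rw [le_div_iff₀ (by linarith : (0:ℝ) < s - t)]
    linarith
  exact lt_of_lt_of_le hr (ge_of_tendsto hslope hev)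

lemma char_of_pos {g : ℝ → ℝ} {g' t : ℝ} (hd : HasDerivAt g g' t) (hg' : 0 < g') :
    ∃ r η : ℝ, 0 < r ∧ 0 < η ∧ ∀ s, t < s → s < t + η → g t + r * (s - t) ≤ g s := by
  have hmono : 𝓝[>] t ≤ 𝓝[≠] t :=
    nhdsWithin_mono t (fun s hs => ne_of_gt hs)
  have hslope : Tendsto (slope g t) (𝓝[>] t) (𝓝 g') :=
    (hasDerivAt_iff_tendsto_slope.1 hd).mono_left hmono
  have hev : ∀ᶠ s in 𝓝[>] t, g' / 2 < slope g t s :=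
    hslope.eventually_const_lt (by linarith)
  obtain ⟨u, hu, hsub⟩ := mem_nhdsGT_iff_exists_Ioo_subset.1 hev
  refine ⟨g' / 2, u - t, by linarith, by simpa using hu, ?_⟩
  intro s hs1 hs2
  have hs : s ∈ Set.Ioo t u := ⟨hs1, by linarith⟩
  have := hsub hs
  rw [Set.mem_setOf_eq, slope_def_field, lt_div_iff₀ (by linarith : (0:ℝ) < s - t)] at this
  linarith

/-- characterization of positive derivative by the first-order condition -/
lemma char_iff_pos {g : ℝ → ℝ} {t εv : ℝ} (ht : t ∈ Set.Ioo 0 εv)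
    (hd : DifferentiableAt ℝ g t) :
    (∃ r η : ℝ, 0 < r ∧ 0 < η ∧
        ∀ s, t < s → s < t + η → s < εv → g t + r * (s - t) ≤ g s) ↔ 0 < deriv g t := by
  constructor
  · exact fun h => pos_of_char ht.2 hd.hasDerivAt h
  · intro h
    obtain ⟨r, η, hr, hη, H⟩ := char_of_pos hd.hasDerivAt h
    exact ⟨r, η, hr, hη, fun s h1 h2 _ => H s h1 h2⟩

/-- characterization of negative derivative, by applying the previous to -g -/
lemma char_iff_neg {g : ℝ → ℝ} {t εv : ℝ} (ht : t ∈ Set.Ioo 0 εv)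
    (hd : DifferentiableAt ℝ g t) :
    (∃ r η : ℝ, 0 < r ∧ 0 < η ∧
        ∀ s, t < s → s < t + η → s < εv → g s ≤ g t - r * (s - t)) ↔ deriv g t < 0 := by
  have hng : DifferentiableAt ℝ (fun y => -g y) t := hd.neg
  have hder : deriv (fun y => -g y) t = - deriv g t := by
    simp [deriv.neg]
  have := char_iff_pos (g := fun y => -g y) ht hng
  rw [hder] at this
  constructor
  · intro ⟨r, η, hr, hη, H⟩
    have : (0:ℝ) < - deriv g t := this.1 ⟨r, η, hr, hη, fun s h1 h2 h3 => by
      have := H s h1 h2 h3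
      linarith⟩
    linarith
  · intro h
    obtain ⟨r, η, hr, hη, H⟩ := this.2 (by linarith)
    refine ⟨r, η, hr, hη, fun s h1 h2 h3 => ?_⟩
    have := H s h1 h2 h3
    linarith

end Analysis


open Filter Topology Set in
/-- Reverse l'Hôpital's rule for definable functions: if φ, ψ are definable and
differentiable on (0, ε), tend to 0 at 0⁺, ψ' > 0 near 0⁺, and φ/ψ → ℓ at 0⁺,
then φ'/ψ' → ℓ at 0⁺. -/
theorem reverse_lhopital (R : OminimalStructure) (ε : ℝ) (hε : 0 < ε) (φ ψ : ℝ → ℝ)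
    (hφdef : {x : Fin 2 → ℝ | x 0 ∈ Set.Ioo 0 ε ∧ x 1 = φ (x 0)} ∈ R.sets 2)
    (hψdef : {x : Fin 2 → ℝ | x 0 ∈ Set.Ioo 0 ε ∧ x 1 = ψ (x 0)} ∈ R.sets 2)
    (hφdiff : ∀ t ∈ Set.Ioo 0 ε, DifferentiableAt ℝ φ t)
    (hψdiff : ∀ t ∈ Set.Ioo 0 ε, DifferentiableAt ℝ ψ t)
    (hφ0 : Filter.Tendsto φ (nhdsWithin 0 (Set.Ioi 0)) (nhds 0))
    (hψ0 : Filter.Tendsto ψ (nhdsWithin 0 (Set.Ioi 0)) (nhds 0))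
    (hψ' : ∀ᶠ t in nhdsWithin 0 (Set.Ioi 0), 0 < deriv ψ t)
    (ℓ : ℝ)
    (hlim : Filter.Tendsto (fun t => φ t / ψ t) (nhdsWithin 0 (Set.Ioi 0)) (nhds ℓ)) :
    Filter.Tendsto (fun t => deriv φ t / deriv ψ t) (nhdsWithin 0 (Set.Ioi 0)) (nhds ℓ) := by
  have hIooEv : ∀ᶠ t in 𝓝[>] (0:ℝ), t ∈ Set.Ioo 0 ε := by
    filter_upwards [Ioo_mem_nhdsGT_of_mem (show (0:ℝ) ∈ Set.Ico 0 ε from ⟨le_refl _, hε⟩)]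
      with t ht
    exact ht
  -- ψ is positive near 0⁺
  have hψpos : ∀ᶠ t in 𝓝[>] (0:ℝ), 0 < ψ t := by
    obtain ⟨u, hu, hsub⟩ := mem_nhdsGT_iff_exists_Ioo_subset.1 (hψ'.and hIooEv)
    have hmono : StrictMonoOn ψ (Set.Ioo 0 u) := by
      apply strictMonoOn_of_deriv_pos (convex_Ioo 0 u)
      · exact fun x hx => (hψdiff x (hsub hx).2).continuousAt.continuousWithinAt
      · rw [interior_Ioo]; exact fun x hx => (hsub hx).1
    filter_upwards [Ioo_mem_nhdsGT_of_mem (show (0:ℝ) ∈ Set.Ico 0 u from ⟨le_refl _, hu⟩)]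
      with t ht
    have hs0 : t / 2 ∈ Set.Ioo 0 u := ⟨by linarith [ht.1], by linarith [ht.1, ht.2]⟩
    have h1 : ψ (t / 2) < ψ t := hmono hs0 ht (by linarith [ht.1])
    have h2 : 0 ≤ ψ (t / 2) := by
      apply le_of_tendsto hψ0
      filter_upwards [Ioo_mem_nhdsGT_of_mem
        (show (0:ℝ) ∈ Set.Ico 0 (t / 2) from ⟨le_refl _, hs0.1⟩)] with s hs
      exact (hmono ⟨hs.1, hs.2.trans hs0.2⟩ hs0 hs.2).le
    linarith
  -- upper bound: for c > ℓ, eventually deriv φ ≤ c * deriv ψ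
  have main_pos : ∀ c : ℝ, ℓ < c → ∀ᶠ t in 𝓝[>] (0:ℝ), deriv φ t ≤ c * deriv ψ t := by
    intro c hc
    set g : ℝ → ℝ := fun y => φ y - c * ψ y with hgdef
    have hgd : ∀ t ∈ Set.Ioo 0 ε, HasDerivAt g (deriv φ t - c * deriv ψ t) t := fun t ht =>
      ((hφdiff t ht).hasDerivAt.sub ((hψdiff t ht).hasDerivAt.const_mul c))
    have hgderiv : ∀ t ∈ Set.Ioo 0 ε, deriv g t = deriv φ t - c * deriv ψ t := fun t ht =>
      (hgd t ht).deriv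
    have hgdiff : ∀ t ∈ Set.Ioo 0 ε, DifferentiableAt ℝ g t := fun t ht =>
      (hgd t ht).differentiableAt
    have hgneg : ∀ᶠ t in 𝓝[>] (0:ℝ), g t < 0 := by
      filter_upwards [hψpos, hlim.eventually_lt_const hc] with t h1 h2
      have := (div_lt_iff₀ h1).1 h2
      simp only [hgdef]
      linarith
    rcases omin_dichotomy R (Fml.realize_mem (charPos R ε c hφdef hψdef)) with hcase | hcase
    · exfalso
      have hev : ∀ᶠ t in 𝓝[>] (0:ℝ), 0 < deriv g t ∧ t ∈ Set.Ioo 0 ε := by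
        filter_upwards [hcase, hIooEv] with t hc1 ht
        have hre := (realize_charPos c hφdef hψdef (fun _ : Fin 1 => t)).1 hc1
        refine ⟨(char_iff_pos ht (hgdiff t ht)).1 ?_, ht⟩
        exact hre.2
      obtain ⟨u, hu, hsub⟩ := mem_nhdsGT_iff_exists_Ioo_subset.1 hev
      have hmono : StrictMonoOn g (Set.Ioo 0 u) := by
        apply strictMonoOn_of_deriv_pos (convex_Ioo 0 u)
        · exact fun x hx => (hgdiff x (hsub hx).2).continuousAt.continuousWithinAt
        · rw [interior_Ioo]; exact fun x hx => (hsub hx).1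
      have hg0 : Tendsto g (𝓝[>] (0:ℝ)) (𝓝 0) := by
        have := hφ0.sub (hψ0.const_mul c)
        simpa using this
      have hnonneg : ∀ t ∈ Set.Ioo 0 u, 0 ≤ g t := by
        intro t ht
        apply le_of_tendsto hg0
        filter_upwards [Ioo_mem_nhdsGT_of_mem
          (show (0:ℝ) ∈ Set.Ico 0 t from ⟨le_refl _, ht.1⟩)] with s hs
        exact (hmono ⟨hs.1, hs.2.trans ht.2⟩ ht hs.2).le
      obtain ⟨t, h1, h2⟩ := (hgneg.and (by
        filter_upwards [Ioo_mem_nhdsGT_of_mem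
          (show (0:ℝ) ∈ Set.Ico 0 u from ⟨le_refl _, hu⟩)] with s hs
        exact hs : ∀ᶠ t in 𝓝[>] (0:ℝ), t ∈ Set.Ioo 0 u)).exists
      exact absurd (hnonneg t h2) (not_le.2 h1)
    · filter_upwards [hcase, hIooEv] with t hc1 ht
      by_contra hcon
      push_neg at hcon
      apply hc1
      apply (realize_charPos c hφdef hψdef (fun _ : Fin 1 => t)).2
      refine ⟨ht, ?_⟩
      apply (char_iff_pos ht (hgdiff t ht)).2
      rw [hgderiv t ht]
      linarith
  -- lower bound: for c < ℓ, eventually c * deriv ψ ≤ deriv φ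
  have main_neg : ∀ c : ℝ, c < ℓ → ∀ᶠ t in 𝓝[>] (0:ℝ), c * deriv ψ t ≤ deriv φ t := by
    intro c hc
    set g : ℝ → ℝ := fun y => φ y - c * ψ y with hgdef
    have hgd : ∀ t ∈ Set.Ioo 0 ε, HasDerivAt g (deriv φ t - c * deriv ψ t) t := fun t ht =>
      ((hφdiff t ht).hasDerivAt.sub ((hψdiff t ht).hasDerivAt.const_mul c))
    have hgderiv : ∀ t ∈ Set.Ioo 0 ε, deriv g t = deriv φ t - c * deriv ψ t := fun t ht =>
      (hgd t ht).deriv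
    have hgdiff : ∀ t ∈ Set.Ioo 0 ε, DifferentiableAt ℝ g t := fun t ht =>
      (hgd t ht).differentiableAt
    have hgpos : ∀ᶠ t in 𝓝[>] (0:ℝ), 0 < g t := by
      filter_upwards [hψpos, hlim.eventually_const_lt hc] with t h1 h2
      have h3 : c * ψ t < φ t := (lt_div_iff₀ h1).1 h2
      simp only [hgdef]
      linarith
    rcases omin_dichotomy R (Fml.realize_mem (charNeg R ε c hφdef hψdef)) with hcase | hcase
    · exfalso
      have hev : ∀ᶠ t in 𝓝[>] (0:ℝ), deriv g t < 0 ∧ t ∈ Set.Ioo 0 ε := by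
        filter_upwards [hcase, hIooEv] with t hc1 ht
        have hre := (realize_charNeg c hφdef hψdef (fun _ : Fin 1 => t)).1 hc1
        refine ⟨(char_iff_neg ht (hgdiff t ht)).1 ?_, ht⟩
        exact hre.2
      obtain ⟨u, hu, hsub⟩ := mem_nhdsGT_iff_exists_Ioo_subset.1 hev
      have hmono : StrictAntiOn g (Set.Ioo 0 u) := by
        apply strictAntiOn_of_deriv_neg (convex_Ioo 0 u)
        · exact fun x hx => (hgdiff x (hsub hx).2).continuousAt.continuousWithinAt
        · rw [interior_Ioo]; exact fun x hx => (hsub hx).1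
      have hg0 : Tendsto g (𝓝[>] (0:ℝ)) (𝓝 0) := by
        have := hφ0.sub (hψ0.const_mul c)
        simpa using this
      have hnonpos : ∀ t ∈ Set.Ioo 0 u, g t ≤ 0 := by
        intro t ht
        apply ge_of_tendsto hg0
        filter_upwards [Ioo_mem_nhdsGT_of_mem
          (show (0:ℝ) ∈ Set.Ico 0 t from ⟨le_refl _, ht.1⟩)] with s hs
        exact (hmono ⟨hs.1, hs.2.trans ht.2⟩ ht hs.2).le
      obtain ⟨t, h1, h2⟩ := (hgpos.and (by
        filter_upwards [Ioo_mem_nhdsGT_of_mem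
          (show (0:ℝ) ∈ Set.Ico 0 u from ⟨le_refl _, hu⟩)] with s hs
        exact hs : ∀ᶠ t in 𝓝[>] (0:ℝ), t ∈ Set.Ioo 0 u)).exists
      exact absurd (hnonpos t h2) (not_le.2 h1)
    · filter_upwards [hcase, hIooEv] with t hc1 ht
      by_contra hcon
      push_neg at hcon
      apply hc1
      apply (realize_charNeg c hφdef hψdef (fun _ : Fin 1 => t)).2
      refine ⟨ht, ?_⟩
      apply (char_iff_neg ht (hgdiff t ht)).2
      rw [hgderiv t ht]
      linarith
  -- conclude
  rw [Metric.tendsto_nhds]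
  intro δ hδ
  filter_upwards [main_pos (ℓ + δ / 2) (by linarith), main_neg (ℓ - δ / 2) (by linarith),
    hψ'] with t hp hn hψ't
  have h1 : deriv φ t / deriv ψ t ≤ ℓ + δ / 2 := (div_le_iff₀ hψ't).2 (by linarith)
  have h2 : ℓ - δ / 2 ≤ deriv φ t / deriv ψ t := (le_div_iff₀ hψ't).2 (by linarith)
  rw [Real.dist_eq, abs_sub_lt_iff]
  constructor <;> linarith
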